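/- Let Φ_τ, Ψ_τ be positive operators on a finite-dimensional Hilbert space H = g⊗h with Tr_h Φ_τ = Tr_h Ψ_τ = 𝟙_g. Then for every density operator ρ on g, the pointwise squared Hellinger distance inf { (1/2)Tr[(Γ−Υ)†(Γ−Υ)(ρ⊗𝟙_h)] : Γ†Γ = Φ_τ, Υ†Υ = Ψ_τ } equals 1 − Tr[( Φ_τ^{1/2}(ρ⊗𝟙)Ψ_τ(ρ⊗𝟙)Φ_τ^{1/2} )^{1/2}]. -/

import Mathlib

set_option linter.unusedSectionVars false
set_option maxHeartbeats 1000000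

open Matrix
open scoped ComplexOrder Classical

noncomputable def msqrt {ι : Type*} [Fintype ι] [DecidableEq ι]
    (A : Matrix ι ι ℂ) : Matrix ι ι ℂ :=
  if h : A.PosSemidef then
    h.1.eigenvectorUnitary.1 * diagonal ((↑) ∘ (√·) ∘ h.1.eigenvalues) *
      (star h.1.eigenvectorUnitary : Matrix ι ι ℂ) else 0

noncomputable def traceNorm {ι : Type*} [Fintype ι] [DecidableEq ι]
    (A : Matrix ι ι ℂ) : ℝ :=
  ((msqrt (Aᴴ * A)).trace).re

noncomputable def uFid {ι : Type*} [Fintype ι] [DecidableEq ι]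
    (ρ σ : Matrix ι ι ℂ) : ℝ :=
  ((msqrt (msqrt ρ * σ * msqrt ρ)).trace).re

def IsDensity {ι : Type*} [Fintype ι] (ρ : Matrix ι ι ℂ) : Prop :=
  ρ.PosSemidef ∧ ρ.trace = 1
open Kronecker

/-- Partial trace over the second tensor factor. -/
noncomputable def ptraceRight {m n : ℕ} (M : Matrix (Fin m × Fin n) (Fin m × Fin n) ℂ) :
    Matrix (Fin m) (Fin m) ℂ :=
  fun i j => ∑ k : Fin n, M (i, k) (j, k)

section Aux

variable {ι : Type*} [Fintype ι] [DecidableEq ι]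

lemma msqrt_eq {A : Matrix ι ι ℂ} (hA : A.PosSemidef) : msqrt A =
    hA.1.eigenvectorUnitary.1 * diagonal ((↑) ∘ (√·) ∘ hA.1.eigenvalues) *
      (star hA.1.eigenvectorUnitary : Matrix ι ι ℂ) := dif_pos hA

lemma msqrt_posSemidef {A : Matrix ι ι ℂ} (hA : A.PosSemidef) : (msqrt A).PosSemidef := by
  rw [msqrt_eq hA]
  have hD : (diagonal ((↑) ∘ (√·) ∘ hA.1.eigenvalues) : Matrix ι ι ℂ).PosSemidef := by
    rw [posSemidef_diagonal_iff]
    intro i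
    simp only [Function.comp_apply, Complex.zero_le_real]
    exact Real.sqrt_nonneg _
  simpa [Matrix.star_eq_conjTranspose] using
    hD.mul_mul_conjTranspose_same (hA.1.eigenvectorUnitary : Matrix ι ι ℂ)

lemma msqrt_mul_self {A : Matrix ι ι ℂ} (hA : A.PosSemidef) : msqrt A * msqrt A = A := by
  rw [msqrt_eq hA]
  have hU : (star hA.1.eigenvectorUnitary : Matrix ι ι ℂ) * hA.1.eigenvectorUnitary.1 = 1 :=
    (hA.1.eigenvectorUnitary).2.1
  have hDD : (diagonal ((↑) ∘ (√·) ∘ hA.1.eigenvalues) : Matrix ι ι ℂ) *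
      diagonal ((↑) ∘ (√·) ∘ hA.1.eigenvalues) = diagonal ((↑) ∘ hA.1.eigenvalues) := by
    rw [diagonal_mul_diagonal]
    congr 1; funext i
    simp only [Function.comp_apply]
    rw [← Complex.ofReal_mul, Real.mul_self_sqrt (hA.eigenvalues_nonneg i)]
  have spec : A = hA.1.eigenvectorUnitary.1 * diagonal ((↑) ∘ hA.1.eigenvalues) *
      (star hA.1.eigenvectorUnitary : Matrix ι ι ℂ) := by
    simpa using hA.1.spectral_theorem
  calc _ = hA.1.eigenvectorUnitary.1 * (diagonal ((↑) ∘ (√·) ∘ hA.1.eigenvalues) *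
        ((star hA.1.eigenvectorUnitary : Matrix ι ι ℂ) * hA.1.eigenvectorUnitary.1) *
        diagonal ((↑) ∘ (√·) ∘ hA.1.eigenvalues)) *
        (star hA.1.eigenvectorUnitary : Matrix ι ι ℂ) := by simp only [mul_assoc]
    _ = A := by rw [hU, mul_one, hDD, ← spec]

lemma msqrt_herm {A : Matrix ι ι ℂ} (hA : A.PosSemidef) : (msqrt A)ᴴ = msqrt A :=
  (msqrt_posSemidef hA).1

lemma trace_conjTranspose_mul (A B : Matrix ι ι ℂ) :
    (Aᴴ * B).trace = ∑ p : ι × ι, (starRingEnd ℂ) (A p.1 p.2) * B p.1 p.2 := by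
  rw [Matrix.trace, Fintype.sum_prod_type]
  simp [Matrix.diag, Matrix.mul_apply, conjTranspose_apply]
  rw [Finset.sum_comm]

lemma trace_conjTranspose_mul_self_re_nonneg (A : Matrix ι ι ℂ) :
    0 ≤ ((Aᴴ * A).trace).re := by
  rw [trace_conjTranspose_mul]
  rw [Complex.re_sum]
  apply Finset.sum_nonneg
  intro p _
  have : ((starRingEnd ℂ) (A p.1 p.2) * A p.1 p.2).re
      = (A p.1 p.2).re^2 + (A p.1 p.2).im^2 := by
    simp [Complex.mul_re]; ring
  rw [this]; positivity

lemma trace_cs (A B : Matrix ι ι ℂ) :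
    ((Aᴴ * B).trace).re ≤
      Real.sqrt (((Aᴴ * A).trace).re) * Real.sqrt (((Bᴴ * B).trace).re) := by
  let f : Matrix ι ι ℂ → EuclideanSpace ℂ (ι × ι) :=
    fun M => (WithLp.equiv 2 ((ι × ι) → ℂ)).symm (fun p => M p.1 p.2)
  have hinner : ∀ M N : Matrix ι ι ℂ,
      (inner ℂ (f M) (f N) : ℂ) = (Mᴴ * N).trace := by
    intro M N
    rw [trace_conjTranspose_mul]
    simp [f, PiLp.inner_apply, mul_comm]
  have h1 : ((Aᴴ * B).trace).re = Complex.re (inner ℂ (f A) (f B) : ℂ) := by rw [hinner]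
  have h2 : Real.sqrt (((Aᴴ * A).trace).re) = ‖f A‖ := by
    rw [norm_eq_sqrt_re_inner (𝕜 := ℂ), hinner]; rw [RCLike.re_to_complex]
  have h3 : Real.sqrt (((Bᴴ * B).trace).re) = ‖f B‖ := by
    rw [norm_eq_sqrt_re_inner (𝕜 := ℂ), hinner]; rw [RCLike.re_to_complex]
  rw [h1, h2, h3]
  have := re_inner_le_norm (𝕜 := ℂ) (f A) (f B)
  rwa [RCLike.re_to_complex] at this

lemma polar_decomp (A : Matrix ι ι ℂ) :
    ∃ U : Matrix ι ι ℂ, Uᴴ * U = 1 ∧ A = U * msqrt (Aᴴ * A) := by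
  have hP : (Aᴴ * A).PosSemidef := posSemidef_conjTranspose_mul_self A
  have h1 : (Aᴴ * A).IsHermitian := hP.1
  set V : Matrix ι ι ℂ := (h1.eigenvectorUnitary : Matrix ι ι ℂ) with hVdef
  have hVmem := (h1.eigenvectorUnitary).2
  have hVl : Vᴴ * V = 1 := by
    have := hVmem.1
    simpa [Matrix.star_eq_conjTranspose] using this
  have hVr : V * Vᴴ = 1 := by
    have := hVmem.2
    simpa [Matrix.star_eq_conjTranspose] using this
  set d : ι → ℝ := h1.eigenvalues with hddef
  have hd : ∀ i, 0 ≤ d i := hP.eigenvalues_nonneg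
  have spec : Aᴴ * A = V * diagonal ((↑) ∘ d) * Vᴴ := by
    simpa [Matrix.star_eq_conjTranspose] using h1.spectral_theorem
  have hsqrt : msqrt (Aᴴ * A) = V * diagonal ((↑) ∘ Real.sqrt ∘ d) * Vᴴ := by
    rw [msqrt_eq hP]
    rfl
  set B : Matrix ι ι ℂ := A * V with hBdef
  have hBB : Bᴴ * B = diagonal ((↑) ∘ d) := by
    have : Bᴴ * B = Vᴴ * (Aᴴ * A) * V := by
      rw [hBdef, conjTranspose_mul]; simp [mul_assoc]
    rw [this, spec]
    calc Vᴴ * (V * diagonal ((↑) ∘ d) * Vᴴ) * V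
        = (Vᴴ * V) * diagonal ((↑) ∘ d) * (Vᴴ * V) := by simp [mul_assoc]
      _ = diagonal ((↑) ∘ d) := by rw [hVl, one_mul, mul_one]
  set v : ι → EuclideanSpace ℂ ι :=
    fun i => (WithLp.equiv 2 (ι → ℂ)).symm (fun k => ((Real.sqrt (d i))⁻¹ : ℂ) * B k i)
    with hvdef
  have hinner : ∀ i j, (inner ℂ (v i) (v j) : ℂ)
      = ((Real.sqrt (d i))⁻¹ : ℂ) * ((Real.sqrt (d j))⁻¹ : ℂ) * (Bᴴ * B) i j := by
    intro i j
    simp only [hvdef, PiLp.inner_apply, RCLike.inner_apply, WithLp.equiv_symm_apply, PiLp.toLp_apply]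
    rw [Matrix.mul_apply]
    simp only [conjTranspose_apply]
    rw [Finset.mul_sum]
    apply Finset.sum_congr rfl
    intro k _
    simp only [Complex.star_def, _root_.map_mul, map_inv₀, Complex.conj_ofReal]
    ring
  have hon : Orthonormal ℂ (Set.restrict {i | d i ≠ 0} v) := by
    rw [orthonormal_iff_ite]
    rintro ⟨i, hi⟩ ⟨j, hj⟩
    show inner ℂ (v i) (v j) = _
    rw [hinner, hBB]
    by_cases hij : i = j
    · subst hij
      simp only [diagonal_apply_eq, Function.comp_apply]
      have hdi : (0:ℝ) < d i := lt_of_le_of_ne (hd i) (Ne.symm hi)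
      rw [if_pos trivial]
      have hr : ((Real.sqrt (d i))⁻¹) * ((Real.sqrt (d i))⁻¹) * d i = 1 := by
        rw [← mul_inv, Real.mul_self_sqrt (hd i), inv_mul_cancel₀ hi]
      have : ((Real.sqrt (d i))⁻¹ : ℂ) * ((Real.sqrt (d i))⁻¹ : ℂ) * (d i : ℂ)
          = ((((Real.sqrt (d i))⁻¹) * ((Real.sqrt (d i))⁻¹) * d i : ℝ) : ℂ) := by
        push_cast; ring
      rw [this, hr, Complex.ofReal_one]
    · have : ¬ (Subtype.mk i hi = Subtype.mk j hj) := by simp [hij]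
      rw [if_neg this, diagonal_apply_ne _ hij]
      ring
  obtain ⟨b, hb⟩ := hon.exists_orthonormalBasis_extension_of_card_eq
    (by simp [finrank_euclideanSpace])
  set W : Matrix ι ι ℂ := fun k i => b i k with hWdef
  have hWl : Wᴴ * W = 1 := by
    ext i j
    rw [Matrix.mul_apply]
    have := (orthonormal_iff_ite (𝕜 := ℂ)).mp b.orthonormal i j
    rw [PiLp.inner_apply] at this
    simp only [RCLike.inner_apply] at this
    simp only [conjTranspose_apply, hWdef, Matrix.one_apply, star]
    rw [← this]
    exact Finset.sum_congr rfl (fun x _ => mul_comm _ _)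
  have hBW : B = W * diagonal ((↑) ∘ Real.sqrt ∘ d) := by
    ext k i
    rw [Matrix.mul_apply, Finset.sum_eq_single i
      (fun j _ hji => by rw [diagonal_apply_ne _ hji, mul_zero])
      (fun h => absurd (Finset.mem_univ i) h)]
    rw [diagonal_apply_eq]
    by_cases hi : d i = 0
    · have hcol : ∑ l, Complex.normSq (B l i) = 0 := by
        have h0 : (Bᴴ * B) i i = 0 := by
          rw [hBB, diagonal_apply_eq, Function.comp_apply, hi, Complex.ofReal_zero]
        rw [Matrix.mul_apply] at h0
        have : ∀ l, ((Bᴴ) i l * B l i) = (Complex.normSq (B l i) : ℂ) := by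
          intro l
          simp [conjTranspose_apply, Complex.star_def, Complex.normSq_eq_conj_mul_self]
        rw [Finset.sum_congr rfl (fun l _ => this l)] at h0
        exact_mod_cast (by exact_mod_cast h0 : ((∑ l, Complex.normSq (B l i) : ℝ) : ℂ) = 0)
      have : Complex.normSq (B k i) = 0 :=
        (Finset.sum_eq_zero_iff_of_nonneg
          (fun l _ => Complex.normSq_nonneg _)).mp hcol k (Finset.mem_univ k)
      rw [Complex.normSq_eq_zero.mp this]
      simp [hi]
    · have hbi := hb i hi
      have hW : b i k = ((Real.sqrt (d i))⁻¹ : ℂ) * B k i := by rw [hbi]; rfl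
      show B k i = b i k * ((Real.sqrt (d i) : ℝ) : ℂ)
      rw [hW]
      have hdi : (0:ℝ) < d i := lt_of_le_of_ne (hd i) (Ne.symm hi)
      have hsne : (Real.sqrt (d i) : ℂ) ≠ 0 := by
        simp only [ne_eq, Complex.ofReal_eq_zero]
        positivity
      field_simp
  refine ⟨W * Vᴴ, ?_, ?_⟩
  · rw [conjTranspose_mul, conjTranspose_conjTranspose]
    calc V * Wᴴ * (W * Vᴴ) = V * (Wᴴ * W) * Vᴴ := by simp [mul_assoc]
      _ = 1 := by rw [hWl, mul_one, hVr]
  · rw [hsqrt]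
    calc A = A * (V * Vᴴ) := by rw [hVr, mul_one]
      _ = B * Vᴴ := by rw [hBdef, mul_assoc]
      _ = W * diagonal ((↑) ∘ Real.sqrt ∘ d) * Vᴴ := by rw [hBW]
      _ = W * Vᴴ * (V * diagonal ((↑) ∘ Real.sqrt ∘ d) * Vᴴ) := by
          rw [show W * Vᴴ * (V * diagonal ((↑) ∘ Real.sqrt ∘ d) * Vᴴ)
              = W * (Vᴴ * V) * diagonal ((↑) ∘ Real.sqrt ∘ d) * Vᴴ by simp [mul_assoc],
            hVl, mul_one]

lemma trace_unitary_mul_le {U : Matrix ι ι ℂ} (M : Matrix ι ι ℂ) (hU : Uᴴ * U = 1) :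
    ((U * M).trace).re ≤ ((msqrt (Mᴴ * M)).trace).re := by
  obtain ⟨P, hPl, hPM⟩ := polar_decomp M
  have hPr : P * Pᴴ = 1 := mul_eq_one_comm.mp hPl
  have hUr : U * Uᴴ = 1 := mul_eq_one_comm.mp hU
  have hSpsd : (msqrt (Mᴴ * M)).PosSemidef :=
    msqrt_posSemidef (posSemidef_conjTranspose_mul_self M)
  set S := msqrt (Mᴴ * M) with hS
  set R := msqrt S with hR
  have hRps : R.PosSemidef := msqrt_posSemidef hSpsd
  have hRR : R * R = S := msqrt_mul_self hSpsd
  have hRH : Rᴴ = R := hRps.1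
  set A := Pᴴ * Uᴴ * R with hA
  have hAH : Aᴴ = R * U * P := by
    rw [hA, conjTranspose_mul, conjTranspose_mul, conjTranspose_conjTranspose,
      conjTranspose_conjTranspose, hRH]
    simp [mul_assoc]
  have key : (U * M).trace = (Aᴴ * R).trace := by
    rw [hAH]
    have h2 : R * U * P * R = R * (U * P * R) := by simp [mul_assoc]
    have h3 : U * P * R * R = U * M := by
      calc U * P * R * R = U * (P * (R * R)) := by simp [mul_assoc]
        _ = U * M := by rw [hRR, ← hPM]
    rw [h2, Matrix.trace_mul_comm R (U * P * R), h3]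
  have hAA : Aᴴ * A = S := by
    rw [hAH, hA]
    calc R * U * P * (Pᴴ * Uᴴ * R) = R * (U * (P * Pᴴ) * Uᴴ) * R := by simp [mul_assoc]
      _ = R * R := by rw [hPr, mul_one, hUr, mul_one]
      _ = S := hRR
  have hRt : ((Rᴴ * R).trace).re = (S.trace).re := by rw [hRH, hRR]
  have htn : 0 ≤ (S.trace).re := by
    rw [← hRt]; exact trace_conjTranspose_mul_self_re_nonneg R
  calc ((U * M).trace).re = ((Aᴴ * R).trace).re := by rw [key]
    _ ≤ Real.sqrt (((Aᴴ * A).trace).re) * Real.sqrt (((Rᴴ * R).trace).re) := trace_cs A R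
    _ = Real.sqrt ((S.trace).re) * Real.sqrt ((S.trace).re) := by rw [hAA, hRt]
    _ = (S.trace).re := Real.mul_self_sqrt htn

end Aux

lemma trace_mul_kron {m n : ℕ} (A : Matrix (Fin m × Fin n) (Fin m × Fin n) ℂ)
    (ρ : Matrix (Fin m) (Fin m) ℂ) :
    (A * (ρ ⊗ₖ (1 : Matrix (Fin n) (Fin n) ℂ))).trace = (ptraceRight A * ρ).trace := by
  simp only [Matrix.trace, Matrix.diag, Matrix.mul_apply, ptraceRight,
    kroneckerMap_apply, Matrix.one_apply, Fintype.sum_prod_type,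
    mul_ite, mul_one, mul_zero, Finset.sum_ite_eq, Finset.sum_ite_eq',
    Finset.mem_univ, if_true, Finset.sum_mul]
  exact Finset.sum_congr rfl (fun i _ => Finset.sum_comm)

lemma kron_one_herm {m n : ℕ} {ρ : Matrix (Fin m) (Fin m) ℂ} (h : ρ.IsHermitian) :
    (ρ ⊗ₖ (1 : Matrix (Fin n) (Fin n) ℂ))ᴴ = ρ ⊗ₖ (1 : Matrix (Fin n) (Fin n) ℂ) := by
  ext p q
  have h1 : star (ρ q.1 p.1) = ρ p.1 q.1 := by
    have := congrFun (congrFun h p.1) q.1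
    simpa [conjTranspose_apply] using this
  simp only [conjTranspose_apply, kroneckerMap_apply, Matrix.one_apply, star_mul', h1,
    apply_ite, star_one, star_zero]
  by_cases hpq : q.2 = p.2
  · rw [if_pos hpq, if_pos hpq.symm]
  · rw [if_neg hpq, if_neg (Ne.symm hpq)]

lemma value_eq {ι : Type*} [Fintype ι] [DecidableEq ι]
    {Φ Ψ X Γ Υ : Matrix ι ι ℂ} (hX : Xᴴ = X)
    (hΓ : Γᴴ * Γ = Φ) (hΥ : Υᴴ * Υ = Ψ)
    (hΦt : ((Φ * X).trace).re = 1) (hΨt : ((Ψ * X).trace).re = 1) :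
    (1 / 2) * ((((Γ - Υ)ᴴ * (Γ - Υ) * X).trace).re)
      = 1 - ((Γᴴ * Υ * X).trace).re := by
  have expand : (Γ - Υ)ᴴ * (Γ - Υ) * X
      = Φ * X - Γᴴ * Υ * X - (Υᴴ * Γ * X - Ψ * X) := by
    rw [← hΓ, ← hΥ, conjTranspose_sub]
    noncomm_ring
  rw [expand, Matrix.trace_sub, Matrix.trace_sub, Matrix.trace_sub]
  have e1 : (Υᴴ * Γ * X).trace = (X * (Υᴴ * Γ)).trace := Matrix.trace_mul_comm _ _
  have e2 : X * (Υᴴ * Γ) = (Γᴴ * Υ * X)ᴴ := by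
    rw [conjTranspose_mul, conjTranspose_mul, conjTranspose_conjTranspose, hX]
  have e3 : ((Υᴴ * Γ * X).trace).re = ((Γᴴ * Υ * X).trace).re := by
    rw [e1, e2, Matrix.trace_conjTranspose]
    exact Complex.conj_re _
  rw [Complex.sub_re, Complex.sub_re, Complex.sub_re, hΦt, hΨt, e3]
  ring

/-- Pointwise squared Hellinger distance between channels with operational
densities `Φτ, Ψτ`: for each density `ρ`,
`inf {(1/2)Tr[(Γ−Υ)†(Γ−Υ)(ρ⊗𝟙)] : Γ†Γ = Φτ, Υ†Υ = Ψτ}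
  = 1 − Tr[(Φτ^{1/2}(ρ⊗𝟙)Ψτ(ρ⊗𝟙)Φτ^{1/2})^{1/2}]`. -/
theorem stmt12 {m n : ℕ} (Φτ Ψτ : Matrix (Fin m × Fin n) (Fin m × Fin n) ℂ)
    (hΦ : Φτ.PosSemidef) (hΨ : Ψτ.PosSemidef)
    (hΦ1 : ptraceRight Φτ = 1) (hΨ1 : ptraceRight Ψτ = 1)
    (ρ : Matrix (Fin m) (Fin m) ℂ) (hρ : IsDensity ρ) :
    sInf {t : ℝ | ∃ Γ Υ : Matrix (Fin m × Fin n) (Fin m × Fin n) ℂ,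
        Γᴴ * Γ = Φτ ∧ Υᴴ * Υ = Ψτ ∧
        t = (1 / 2) * ((((Γ - Υ)ᴴ * (Γ - Υ) *
          (ρ ⊗ₖ (1 : Matrix (Fin n) (Fin n) ℂ))).trace).re)} =
      1 - ((msqrt (msqrt Φτ * (ρ ⊗ₖ (1 : Matrix (Fin n) (Fin n) ℂ)) * Ψτ *
        (ρ ⊗ₖ (1 : Matrix (Fin n) (Fin n) ℂ)) * msqrt Φτ)).trace).re := by
  obtain ⟨hρpsd, hρtr⟩ := hρ
  have hXH : (ρ ⊗ₖ (1 : Matrix (Fin n) (Fin n) ℂ))ᴴ = ρ ⊗ₖ (1 : Matrix (Fin n) (Fin n) ℂ) :=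
    kron_one_herm hρpsd.1
  have hΦt : ((Φτ * (ρ ⊗ₖ (1 : Matrix (Fin n) (Fin n) ℂ))).trace).re = 1 := by
    rw [trace_mul_kron, hΦ1, one_mul, hρtr, Complex.one_re]
  have hΨt : ((Ψτ * (ρ ⊗ₖ (1 : Matrix (Fin n) (Fin n) ℂ))).trace).re = 1 := by
    rw [trace_mul_kron, hΨ1, one_mul, hρtr, Complex.one_re]
  set X := ρ ⊗ₖ (1 : Matrix (Fin n) (Fin n) ℂ) with hXdef
  set M := msqrt Ψτ * X * msqrt Φτ with hMdef
  have hMH : Mᴴ = msqrt Φτ * X * msqrt Ψτ := by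
    rw [hMdef, conjTranspose_mul, conjTranspose_mul, msqrt_herm hΦ, msqrt_herm hΨ, hXH]
    simp [mul_assoc]
  have hMM : Mᴴ * M = msqrt Φτ * X * Ψτ * X * msqrt Φτ := by
    rw [hMH, hMdef]
    calc msqrt Φτ * X * msqrt Ψτ * (msqrt Ψτ * X * msqrt Φτ)
        = msqrt Φτ * X * (msqrt Ψτ * msqrt Ψτ) * (X * msqrt Φτ) := by simp [mul_assoc]
      _ = msqrt Φτ * X * Ψτ * X * msqrt Φτ := by
          rw [msqrt_mul_self hΨ]; simp [mul_assoc]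
  rw [show msqrt Φτ * X * Ψτ * X * msqrt Φτ = Mᴴ * M from hMM.symm]
  apply IsLeast.csInf_eq
  constructor
  · obtain ⟨P, hPl, hPM⟩ := polar_decomp M
    have hPr : P * Pᴴ = 1 := mul_eq_one_comm.mp hPl
    have hΓ0 : (msqrt Φτ)ᴴ * msqrt Φτ = Φτ := by
      rw [msqrt_herm hΦ, msqrt_mul_self hΦ]
    have hΥ0 : (Pᴴ * msqrt Ψτ)ᴴ * (Pᴴ * msqrt Ψτ) = Ψτ := by
      rw [conjTranspose_mul, conjTranspose_conjTranspose, msqrt_herm hΨ]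
      calc msqrt Ψτ * P * (Pᴴ * msqrt Ψτ)
          = msqrt Ψτ * (P * Pᴴ) * msqrt Ψτ := by simp [mul_assoc]
        _ = Ψτ := by rw [hPr, mul_one, msqrt_mul_self hΨ]
    refine ⟨msqrt Φτ, Pᴴ * msqrt Ψτ, hΓ0, hΥ0, ?_⟩
    rw [value_eq hXH hΓ0 hΥ0 hΦt hΨt]
    have hT : ((msqrt Φτ)ᴴ * (Pᴴ * msqrt Ψτ) * X).trace = (msqrt (Mᴴ * M)).trace := by
      rw [msqrt_herm hΦ]
      have e1 : msqrt Φτ * (Pᴴ * msqrt Ψτ) * X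
          = msqrt Φτ * (Pᴴ * msqrt Ψτ * X) := by simp [mul_assoc]
      rw [e1, Matrix.trace_mul_comm]
      have e2 : Pᴴ * msqrt Ψτ * X * msqrt Φτ = Pᴴ * M := by
        rw [hMdef]; simp [mul_assoc]
      rw [e2]
      nth_rewrite 1 [hPM]
      have e3 : Pᴴ * (P * msqrt (Mᴴ * M)) = (Pᴴ * P) * msqrt (Mᴴ * M) := by
        simp [mul_assoc]
      rw [e3, hPl, one_mul]
    rw [hT]
  · rintro t ⟨Γ, Υ, hΓ, hΥ, rfl⟩
    rw [value_eq hXH hΓ hΥ hΦt hΨt]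
    have hbound : ((Γᴴ * Υ * X).trace).re ≤ ((msqrt (Mᴴ * M)).trace).re := by
      obtain ⟨U, hUl, hUΓ⟩ := polar_decomp Γ
      obtain ⟨V, hVl, hVΥ⟩ := polar_decomp Υ
      rw [hΓ] at hUΓ
      rw [hΥ] at hVΥ
      have hUr : U * Uᴴ = 1 := mul_eq_one_comm.mp hUl
      have hWl : (Uᴴ * V)ᴴ * (Uᴴ * V) = 1 := by
        rw [conjTranspose_mul, conjTranspose_conjTranspose]
        calc Vᴴ * U * (Uᴴ * V) = Vᴴ * (U * Uᴴ) * V := by simp [mul_assoc]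
          _ = 1 := by rw [hUr, mul_one, hVl]
      have e : (Γᴴ * Υ * X).trace = ((Uᴴ * V) * M).trace := by
        rw [hUΓ, hVΥ, conjTranspose_mul, msqrt_herm hΦ]
        have e1 : msqrt Φτ * Uᴴ * (V * msqrt Ψτ) * X
            = msqrt Φτ * (Uᴴ * (V * msqrt Ψτ) * X) := by simp [mul_assoc]
        rw [e1, Matrix.trace_mul_comm]
        congr 1
        rw [hMdef]; simp [mul_assoc]
      rw [e]
      exact trace_unitary_mul_le M hWl
    linarith
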